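/- Let K_1,...,K_m be entrywise nonnegative n×n matrices and α_1,...,α_m nonnegative reals with Σ α_j = 1. Then the spectral radius satisfies r(K_1^{(α_1)} ∘ ... ∘ K_m^{(α_m)}) ≤ r(K_1)^{α_1} ··· r(K_m)^{α_m}. -/

import Mathlib

open Matrix Filter Topology Finset
open scoped NNReal ENNReal

attribute [local instance] Matrix.linftyOpNormedRing Matrix.linftyOpNormedAlgebra

/-- The spectral radius of a real `n × n` matrix: the largest modulus of a complex
eigenvalue, obtained via the spectrum of the matrix over `ℂ`. -/
noncomputable def specRad {n : ℕ} (A : Matrix (Fin n) (Fin n) ℝ) : ℝ :=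
  (spectralRadius ℂ (A.map (Complex.ofReal))).toReal

section aux


lemma holder_sum_prod {ι : Type*} {m : ℕ} (s : Finset ι) (w : Fin m → ℝ) (a : Fin m → ι → ℝ)
    (hw : ∀ j, 0 ≤ w j) (hw1 : ∑ j, w j = 1) (ha : ∀ j i, 0 ≤ a j i) :
    ∑ i ∈ s, ∏ j, (a j i) ^ (w j) ≤ ∏ j, (∑ i ∈ s, a j i) ^ (w j) := by
  set T : Finset (Fin m) := Finset.univ.filter (fun j => w j ≠ 0) with hT
  have hmemT : ∀ j, j ∈ T ↔ w j ≠ 0 := by intro j; simp [hT]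
  have hTprod : ∀ (X : Fin m → ℝ), ∏ j ∈ T, (X j) ^ (w j) = ∏ j, (X j) ^ (w j) := by
    intro X
    refine Finset.prod_subset (Finset.subset_univ T) ?_
    intro j _ hj
    have : w j = 0 := by by_contra h; exact hj ((hmemT j).2 h)
    simp [this]
  have hTsum : ∑ j ∈ T, w j = 1 := by
    rw [← hw1]
    refine Finset.sum_subset (Finset.subset_univ T) ?_
    intro j _ hj
    by_contra h; exact hj ((hmemT j).2 h)
  have hLHS : ∑ i ∈ s, ∏ j, (a j i) ^ (w j) = ∑ i ∈ s, ∏ j ∈ T, (a j i) ^ (w j) :=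
    Finset.sum_congr rfl fun i _ => (hTprod fun j => a j i).symm
  rw [← hTprod, hLHS]
  by_cases hz : ∃ j ∈ T, ∑ i ∈ s, a j i = 0
  · obtain ⟨j, hjT, hj0⟩ := hz
    have hzero : ∀ i ∈ s, a j i = 0 :=
      (Finset.sum_eq_zero_iff_of_nonneg (fun i _ => ha j i)).1 hj0
    have : ∑ i ∈ s, ∏ k ∈ T, (a k i) ^ (w k) = 0 := by
      refine Finset.sum_eq_zero fun i hi => Finset.prod_eq_zero hjT ?_
      rw [hzero i hi, Real.zero_rpow ((hmemT j).1 hjT)]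
    rw [this]
    exact Finset.prod_nonneg fun k _ => Real.rpow_nonneg (Finset.sum_nonneg fun i _ => ha k i) _
  · push_neg at hz
    have hSpos : ∀ j ∈ T, 0 < ∑ i ∈ s, a j i := fun j hj =>
      lt_of_le_of_ne (Finset.sum_nonneg fun i _ => ha j i) (Ne.symm (hz j hj))
    set Q : ℝ := ∏ j ∈ T, (∑ i ∈ s, a j i) ^ (w j) with hQ
    have hQpos : 0 < Q :=
      Finset.prod_pos fun j hj => Real.rpow_pos_of_pos (hSpos j hj) _
    have key : ∀ i ∈ s, ∏ j ∈ T, (a j i) ^ (w j)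
        ≤ (∑ j ∈ T, w j * (a j i / (∑ i' ∈ s, a j i'))) * Q := by
      intro i _
      have h1 := Real.geom_mean_le_arith_mean_weighted T w
        (fun j => a j i / (∑ i' ∈ s, a j i')) (fun j _ => hw j) hTsum
        (fun j hj => div_nonneg (ha j i) (hSpos j hj).le)
      have h2 : ∏ j ∈ T, (a j i / (∑ i' ∈ s, a j i')) ^ (w j)
          = (∏ j ∈ T, (a j i) ^ (w j)) / Q := by
        rw [hQ, ← Finset.prod_div_distrib]
        exact Finset.prod_congr rfl fun j hj => Real.div_rpow (ha j i) (Finset.sum_nonneg fun i' _ => ha j i') _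
      rw [h2, div_le_iff₀ hQpos] at h1
      exact h1
    calc ∑ i ∈ s, ∏ j ∈ T, (a j i) ^ (w j)
        ≤ ∑ i ∈ s, (∑ j ∈ T, w j * (a j i / (∑ i' ∈ s, a j i'))) * Q :=
          Finset.sum_le_sum key
      _ = (∑ i ∈ s, ∑ j ∈ T, w j * (a j i / (∑ i' ∈ s, a j i'))) * Q := by
          rw [Finset.sum_mul]
      _ = Q := by
          rw [Finset.sum_comm]
          have : ∀ j ∈ T, ∑ i ∈ s, w j * (a j i / (∑ i' ∈ s, a j i')) = w j := by
            intro j hj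
            rw [← Finset.mul_sum, ← Finset.sum_div, div_self (hSpos j hj).ne', mul_one]
          rw [Finset.sum_congr rfl this, hTsum, one_mul]

variable {n : ℕ}

lemma pow_entry_nonneg (A : Matrix (Fin n) (Fin n) ℝ) (h : ∀ x y, 0 ≤ A x y) :
    ∀ (k : ℕ) (x y : Fin n), 0 ≤ (A ^ k) x y := by
  intro k
  induction k with
  | zero => intro x y; simp only [pow_zero, Matrix.one_apply]; split <;> norm_num
  | succ k ih =>
    intro x y
    rw [pow_succ, Matrix.mul_apply]
    exact Finset.sum_nonneg fun z _ => mul_nonneg (ih x z) (h z y)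

lemma rowsum_le_norm (A : Matrix (Fin n) (Fin n) ℝ) (x : Fin n) :
    ∑ y, |A x y| ≤ ‖A‖ := by
  rw [Matrix.linfty_opNorm_def]
  have h : ((∑ y, ‖A x y‖₊ : ℝ≥0) : ℝ) ≤ ((Finset.univ.sup fun i => ∑ y, ‖A i y‖₊ : ℝ≥0) : ℝ) :=
    NNReal.coe_le_coe.2 (Finset.le_sup (f := fun i => ∑ y, ‖A i y‖₊) (Finset.mem_univ x))
  refine le_trans (le_of_eq ?_) h
  push_cast
  exact Finset.sum_congr rfl fun y _ => (Real.norm_eq_abs _).symm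

lemma norm_le_of_rowsum (A : Matrix (Fin n) (Fin n) ℝ) (c : ℝ) (hc : 0 ≤ c)
    (h : ∀ x, ∑ y, |A x y| ≤ c) : ‖A‖ ≤ c := by
  rw [Matrix.linfty_opNorm_def, ← Real.coe_toNNReal c hc, NNReal.coe_le_coe]
  refine Finset.sup_le fun x _ => ?_
  rw [Real.le_toNNReal_iff_coe_le hc]
  refine le_trans (le_of_eq ?_) (h x)
  push_cast
  exact Finset.sum_congr rfl fun y _ => (Real.norm_eq_abs _)

lemma norm_map_ofReal (A : Matrix (Fin n) (Fin n) ℝ) :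
    ‖A.map (Complex.ofReal)‖ = ‖A‖ := by
  rw [Matrix.linfty_opNorm_def, Matrix.linfty_opNorm_def]
  congr 1
  refine Finset.sup_congr rfl fun x _ => Finset.sum_congr rfl fun y _ => ?_
  simp [Matrix.map_apply]

lemma map_ofReal_pow (A : Matrix (Fin n) (Fin n) ℝ) (k : ℕ) :
    (A.map (Complex.ofReal)) ^ k = (A ^ k).map (Complex.ofReal) := by
  have : ∀ B : Matrix (Fin n) (Fin n) ℝ, B.map (Complex.ofReal) =
      (Complex.ofRealHom.mapMatrix : Matrix (Fin n) (Fin n) ℝ →+* _) B := fun B => rfl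
  rw [this, this, ← map_pow]

lemma specRad_tendsto (A : Matrix (Fin n) (Fin n) ℝ) :
    Tendsto (fun k : ℕ => ‖(A.map Complex.ofReal) ^ k‖ ^ (1/(k:ℝ))) atTop (𝓝 (specRad A)) := by
  haveI : CompleteSpace (Matrix (Fin n) (Fin n) ℂ) :=
    FiniteDimensional.complete ℂ (Matrix (Fin n) (Fin n) ℂ)
  have hG := spectrum.pow_norm_pow_one_div_tendsto_nhds_spectralRadius
    (A.map Complex.ofReal)
  have hfin : spectralRadius ℂ (A.map Complex.ofReal) ≠ ⊤ := by
    refine ne_top_of_le_ne_top ?_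
      (spectrum.spectralRadius_le_pow_nnnorm_pow_one_div ℂ (A.map Complex.ofReal) 0)
    exact ENNReal.mul_ne_top
      (ENNReal.rpow_ne_top_of_nonneg (by norm_num) ENNReal.coe_ne_top)
      (ENNReal.rpow_ne_top_of_nonneg (by norm_num) ENNReal.coe_ne_top)
  have h2 := (ENNReal.tendsto_toReal hfin).comp hG
  refine h2.congr fun k => ?_
  exact ENNReal.toReal_ofReal (Real.rpow_nonneg (norm_nonneg _) _)

end aux

/-- For nonnegative matrices `K j` and nonnegative weights `α j` summing to `1`,
`r(K₁^{(α₁)} ∘ ⋯ ∘ K_m^{(α_m)}) ≤ r(K₁)^{α₁} ⋯ r(K_m)^{α_m}`. -/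
theorem specRad_hadamard_geom_mean_le {n m : ℕ} (K : Fin m → Matrix (Fin n) (Fin n) ℝ)
    (α : Fin m → ℝ) (hK : ∀ j x y, 0 ≤ K j x y) (hα : ∀ j, 0 ≤ α j)
    (hsum : ∑ j, α j = 1) :
    specRad (Matrix.of fun x y => ∏ j, (K j x y) ^ (α j)) ≤ ∏ j, specRad (K j) ^ (α j) := by
  set M : Matrix (Fin n) (Fin n) ℝ := Matrix.of fun x y => ∏ j, (K j x y) ^ (α j) with hMdef
  have hM : ∀ x y, 0 ≤ M x y := fun x y =>
    show (0:ℝ) ≤ ∏ j, (K j x y) ^ (α j) from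
      Finset.prod_nonneg fun j _ => Real.rpow_nonneg (hK j x y) _
  -- entrywise bound
  have hEntry : ∀ (k : ℕ) (x y : Fin n),
      (M ^ k) x y ≤ ∏ j, ((K j ^ k) x y) ^ (α j) := by
    intro k
    induction k with
    | zero =>
      intro x y
      simp only [pow_zero]
      rcases eq_or_ne x y with rfl | h
      · simp [Matrix.one_apply_eq, Real.one_rpow]
      · rw [Matrix.one_apply_ne h]
        exact Finset.prod_nonneg fun j _ => Real.rpow_nonneg le_rfl _
    | succ k ih =>
      intro x y
      rw [pow_succ', Matrix.mul_apply]
      have step1 : ∀ z, M x z * (M ^ k) z y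
          ≤ ∏ j, ((K j x z) * ((K j ^ k) z y)) ^ (α j) := by
        intro z
        have h1 : M x z * (M ^ k) z y ≤ M x z * ∏ j, ((K j ^ k) z y) ^ (α j) :=
          mul_le_mul_of_nonneg_left (ih z y) (hM x z)
        refine h1.trans (le_of_eq ?_)
        rw [hMdef]
        simp only [Matrix.of_apply]
        rw [← Finset.prod_mul_distrib]
        exact Finset.prod_congr rfl fun j _ =>
          (Real.mul_rpow (hK j x z) (pow_entry_nonneg (K j) (hK j) k z y)).symm
      calc ∑ z, M x z * (M ^ k) z y
          ≤ ∑ z, ∏ j, ((K j x z) * ((K j ^ k) z y)) ^ (α j) :=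
            Finset.sum_le_sum fun z _ => step1 z
        _ ≤ ∏ j, (∑ z, (K j x z) * ((K j ^ k) z y)) ^ (α j) :=
            holder_sum_prod Finset.univ α (fun j z => (K j x z) * ((K j ^ k) z y)) hα hsum
              (fun j z => mul_nonneg (hK j x z) (pow_entry_nonneg (K j) (hK j) k z y))
        _ = ∏ j, ((K j ^ (k+1)) x y) ^ (α j) := by
            refine Finset.prod_congr rfl fun j _ => ?_
            rw [pow_succ', Matrix.mul_apply]
  -- norm bound
  have hNorm : ∀ k : ℕ, ‖M ^ k‖ ≤ ∏ j, ‖(K j) ^ k‖ ^ (α j) := by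
    intro k
    refine norm_le_of_rowsum _ _
      (Finset.prod_nonneg fun j _ => Real.rpow_nonneg (norm_nonneg _) _) fun x => ?_
    have habs : ∑ y, |(M ^ k) x y| = ∑ y, (M ^ k) x y :=
      Finset.sum_congr rfl fun y _ => abs_of_nonneg (pow_entry_nonneg M hM k x y)
    rw [habs]
    calc ∑ y, (M ^ k) x y
        ≤ ∑ y, ∏ j, ((K j ^ k) x y) ^ (α j) :=
          Finset.sum_le_sum fun y _ => hEntry k x y
      _ ≤ ∏ j, (∑ y, (K j ^ k) x y) ^ (α j) :=
          holder_sum_prod Finset.univ α (fun j y => (K j ^ k) x y) hα hsum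
            (fun j y => pow_entry_nonneg (K j) (hK j) k x y)
      _ ≤ ∏ j, ‖(K j) ^ k‖ ^ (α j) := by
          refine Finset.prod_le_prod
            (fun j _ => Real.rpow_nonneg
              (Finset.sum_nonneg fun y _ => pow_entry_nonneg (K j) (hK j) k x y) _)
            (fun j _ => ?_)
          refine Real.rpow_le_rpow
            (Finset.sum_nonneg fun y _ => pow_entry_nonneg (K j) (hK j) k x y) ?_ (hα j)
          refine le_trans (le_of_eq ?_) (rowsum_le_norm ((K j) ^ k) x)
          exact Finset.sum_congr rfl fun y _ =>
            (abs_of_nonneg (pow_entry_nonneg (K j) (hK j) k x y)).symm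
  -- take k-th roots
  have h1 : ∀ k : ℕ, ‖(M.map Complex.ofReal) ^ k‖ ^ (1/(k:ℝ))
      ≤ ∏ j, (‖((K j).map Complex.ofReal) ^ k‖ ^ (1/(k:ℝ))) ^ (α j) := by
    intro k
    have e : ∀ (A : Matrix (Fin n) (Fin n) ℝ), ‖(A.map Complex.ofReal) ^ k‖ = ‖A ^ k‖ := by
      intro A; rw [map_ofReal_pow, norm_map_ofReal]
    rw [e]
    have hk : (0:ℝ) ≤ 1/(k:ℝ) := by positivity
    have := Real.rpow_le_rpow (norm_nonneg _) (hNorm k) hk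
    refine this.trans (le_of_eq ?_)
    rw [← Real.finset_prod_rpow _ _ (fun j _ => Real.rpow_nonneg (norm_nonneg _) _)]
    refine Finset.prod_congr rfl fun j _ => ?_
    rw [e, ← Real.rpow_mul (norm_nonneg _), mul_comm, Real.rpow_mul (norm_nonneg _)]
  -- limits
  have h2 : Tendsto (fun k : ℕ => ∏ j, (‖((K j).map Complex.ofReal) ^ k‖ ^ (1/(k:ℝ))) ^ (α j))
      atTop (𝓝 (∏ j, specRad (K j) ^ (α j))) := by
    refine tendsto_finset_prod _ fun j _ => ?_
    exact (specRad_tendsto (K j)).rpow_const (Or.inr (hα j))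
  exact le_of_tendsto_of_tendsto' (specRad_tendsto M) h2 h1
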